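/- Fix 0 < β < 1, let C_β = 2π e^{-2^β}, and define g(k) = 1/(C_β (1-ik) exp((1+ik)^β)) for real k (principal branch power). Then for every K ≥ 1, ∫_{|k| > K} |g(k)| dk ≤ (2^{⌈1/β⌉+1} · ⌈1/β⌉!)/(C_β · (cos(βπ/2))^{⌈1/β⌉}) · (1/K) · exp(-(1/2)·K^β · cos(βπ/2)). -/

import Mathlib

open Complex MeasureTheory Set

private lemma pow_fact_le_exp (n : ℕ) (x : ℝ) (hx : 0 ≤ x) :
    x ^ n / n.factorial ≤ Real.exp x := by
  have := Real.sum_le_exp_of_nonneg hx (n + 1)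
  have h2 : x ^ n / n.factorial ≤ ∑ i ∈ Finset.range (n + 1), x ^ i / i.factorial :=
    Finset.single_le_sum (f := fun i => x ^ i / i.factorial)
      (fun i _ => by positivity) (Finset.self_mem_range_succ n)
  linarith

private lemma re_cpow_ge (β : ℝ) (hβ0 : 0 < β) (hβ1 : β < 1) (k : ℝ) :
    |k| ^ β * Real.cos (β * Real.pi / 2) ≤ ((1 + Complex.I * k) ^ (β : ℂ)).re := by
  set z : ℂ := 1 + Complex.I * k with hz
  have hzre : z.re = 1 := by simp [hz]
  have hz0 : z ≠ 0 := by
    intro h; rw [h] at hzre; simp at hzre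
  have hzabs : 0 < ‖z‖ := norm_pos_iff.mpr hz0
  have hre : (z ^ (β : ℂ)).re
      = Real.exp (Real.log ‖z‖ * β) * Real.cos (Complex.arg z * β) := by
    rw [Complex.cpow_def_of_ne_zero hz0, Complex.exp_re]
    congr 1
    · congr 1
      simp [Complex.mul_re, Complex.log_re]
    · congr 1
      simp [Complex.mul_im, Complex.log_im]
  have hπ := Real.pi_pos
  have hcosb : 0 < Real.cos (β * Real.pi / 2) :=
    Real.cos_pos_of_mem_Ioo ⟨by nlinarith, by nlinarith⟩
  have harg : |Complex.arg z| ≤ Real.pi / 2 :=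
    Complex.abs_arg_le_pi_div_two_iff.mpr (by rw [hzre]; norm_num)
  have hcos : Real.cos (β * Real.pi / 2) ≤ Real.cos (Complex.arg z * β) := by
    rw [← Real.cos_abs (Complex.arg z * β)]
    apply Real.cos_le_cos_of_nonneg_of_le_pi (abs_nonneg _) (by nlinarith)
    rw [abs_mul, abs_of_pos hβ0]
    calc |Complex.arg z| * β ≤ (Real.pi / 2) * β :=
          mul_le_mul_of_nonneg_right harg hβ0.le
      _ = β * Real.pi / 2 := by ring
  have habs : |k| ≤ ‖z‖ := by
    have := Complex.abs_im_le_norm z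
    simpa [hz] using this
  have hrpow : |k| ^ β ≤ Real.exp (Real.log ‖z‖ * β) := by
    rw [← Real.rpow_def_of_pos hzabs]
    exact Real.rpow_le_rpow (abs_nonneg k) habs hβ0.le
  rw [hre]
  exact mul_le_mul hrpow hcos hcosb.le (by positivity)

/-- Tail (truncation) bound for the improved LCHS integrand. -/
theorem stmt8 (β : ℝ) (hβ0 : 0 < β) (hβ1 : β < 1) :
    let C : ℝ := 2 * Real.pi * Real.exp (-(2 : ℝ) ^ β)
    let g : ℝ → ℂ := fun k =>
      1 / ((C : ℂ) * (1 - Complex.I * k) * Complex.exp ((1 + Complex.I * k) ^ (β : ℂ)))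
    let B : ℕ := ⌈1 / β⌉₊
    ∀ K : ℝ, 1 ≤ K →
      (∫ k in {k : ℝ | K < |k|}, ‖g k‖) ≤
        (2 ^ (B + 1) * (Nat.factorial B : ℝ)) / (C * Real.cos (β * Real.pi / 2) ^ B) *
          (1 / K) * Real.exp (-(1 / 2) * K ^ β * Real.cos (β * Real.pi / 2)) := by
  intro C g B K hK
  have hπ := Real.pi_pos
  have hCdef : C = 2 * Real.pi * Real.exp (-(2 : ℝ) ^ β) := rfl
  have hgdef : g = fun k : ℝ =>
      1 / ((C : ℂ) * (1 - Complex.I * k) * Complex.exp ((1 + Complex.I * k) ^ (β : ℂ))) := rfl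
  have hBdef : B = ⌈1 / β⌉₊ := rfl
  have hC : 0 < C := by rw [hCdef]; positivity
  set c : ℝ := Real.cos (β * Real.pi / 2) with hc_def
  have hc : 0 < c :=
    Real.cos_pos_of_mem_Ioo ⟨by nlinarith, by nlinarith⟩
  have hK0 : 0 < K := lt_of_lt_of_le one_pos hK
  set E : ℝ := Real.exp (-(1 / 2) * K ^ β * c) with hE_def
  have hE0 : 0 < E := Real.exp_pos _
  set M : ℝ := 2 ^ B * (B.factorial : ℝ) / (C * c ^ B) * E with hM_def
  have hM0 : 0 < M := by positivity
  have hB1 : (1 : ℝ) ≤ β * B := by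
    have h1 : (1 / β : ℝ) ≤ (B : ℝ) := by rw [hBdef]; exact Nat.le_ceil _
    calc (1 : ℝ) = β * (1 / β) := by field_simp
      _ ≤ β * B := mul_le_mul_of_nonneg_left h1 hβ0.le
  -- the key scalar inequality
  have key : ∀ t : ℝ, K ≤ t → t ≤ M * C * Real.exp (t ^ β * c) := by
    intro t ht
    have ht1 : (1 : ℝ) ≤ t := le_trans hK ht
    have ht0 : (0 : ℝ) ≤ t := by linarith
    set a : ℝ := t ^ β with ha_def
    have haK : K ^ β ≤ a := Real.rpow_le_rpow hK0.le ht hβ0.le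
    have ha1 : (1 : ℝ) ≤ a := by
      calc (1 : ℝ) = (1 : ℝ) ^ β := (Real.one_rpow β).symm
        _ ≤ t ^ β := Real.rpow_le_rpow zero_le_one ht1 hβ0.le
    have ha0 : (0 : ℝ) ≤ a := by linarith
    have step1 : t ≤ a ^ B := by
      calc t = t ^ (1 : ℝ) := (Real.rpow_one t).symm
        _ ≤ t ^ (β * B : ℝ) := Real.rpow_le_rpow_of_exponent_le ht1 hB1
        _ = (t ^ β) ^ (B : ℝ) := Real.rpow_mul ht0 _ _
        _ = a ^ B := Real.rpow_natCast _ _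
    have step2 : (a * c / 2) ^ B ≤ (B.factorial : ℝ) * Real.exp (a * c / 2) := by
      have := pow_fact_le_exp B (a * c / 2) (by positivity)
      have hf : (0 : ℝ) < (B.factorial : ℝ) := by positivity
      rw [div_le_iff₀ hf] at this
      linarith [this]
    have step3 : Real.exp (a * c / 2) ≤ E * Real.exp (a * c) := by
      rw [hE_def, ← Real.exp_add]
      apply Real.exp_le_exp.mpr
      nlinarith [mul_le_mul_of_nonneg_right haK hc.le]
    have hMC : M * C = (B.factorial : ℝ) * (2 / c) ^ B * E := by
      rw [hM_def, div_pow]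
      field_simp
    calc t ≤ a ^ B := step1
      _ = (a * c / 2) ^ B * (2 / c) ^ B := by
          rw [← mul_pow]; congr 1; field_simp
      _ ≤ ((B.factorial : ℝ) * Real.exp (a * c / 2)) * (2 / c) ^ B :=
          mul_le_mul_of_nonneg_right step2 (by positivity)
      _ ≤ ((B.factorial : ℝ) * (E * Real.exp (a * c))) * (2 / c) ^ B :=
          mul_le_mul_of_nonneg_right
            (mul_le_mul_of_nonneg_left step3 (by positivity)) (by positivity)
      _ = M * C * Real.exp (a * c) := by rw [hMC]; ring
  -- pointwise bound
  have hpt : ∀ k ∈ {k : ℝ | K < |k|}, ‖g k‖ ≤ M * |k| ^ (-(2 : ℝ)) := by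
    intro k hk
    have hkt : K < |k| := hk
    have ht1 : (1 : ℝ) ≤ |k| := le_trans hK hkt.le
    have ht0 : (0 : ℝ) < |k| := by linarith
    have hgnorm : ‖g k‖ = 1 / (C * ‖1 - Complex.I * k‖ *
        Real.exp (((1 + Complex.I * k) ^ (β : ℂ)).re)) := by
      rw [hgdef]
      simp only [norm_div, norm_one, norm_mul, Complex.norm_real, Real.norm_eq_abs,
        Complex.norm_exp, abs_of_pos hC]
    have habs : |k| ≤ ‖1 - Complex.I * k‖ := by
      have := Complex.abs_im_le_norm (1 - Complex.I * k)
      simpa using this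
    have hre : |k| ^ β * c ≤ ((1 + Complex.I * k) ^ (β : ℂ)).re :=
      re_cpow_ge β hβ0 hβ1 k
    have hb1 : ‖g k‖ ≤ 1 / (C * |k| * Real.exp (|k| ^ β * c)) := by
      rw [hgnorm]
      apply one_div_le_one_div_of_le (by positivity)
      have h1 : Real.exp (|k| ^ β * c) ≤ Real.exp (((1 + Complex.I * k) ^ (β : ℂ)).re) :=
        Real.exp_le_exp.mpr hre
      have := mul_le_mul (mul_le_mul_of_nonneg_left habs hC.le) h1
        (Real.exp_pos _).le (by positivity)
      linarith
    have hb2 : 1 / (C * |k| * Real.exp (|k| ^ β * c)) ≤ M * |k| ^ (-(2 : ℝ)) := by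
      have hrp : |k| ^ (-(2 : ℝ)) = (|k| ^ 2)⁻¹ := by
        rw [Real.rpow_neg ht0.le, show ((2 : ℝ) = ((2 : ℕ) : ℝ)) by norm_num,
          Real.rpow_natCast]
      rw [hrp, ← div_eq_mul_inv, div_le_div_iff₀ (by positivity) (by positivity)]
      have hkey := key |k| hkt.le
      nlinarith [mul_le_mul_of_nonneg_right hkey ht0.le, Real.exp_pos (|k| ^ β * c)]
    exact le_trans hb1 hb2
  -- set decomposition
  have hSeq : {k : ℝ | K < |k|} = Set.Iio (-K) ∪ Set.Ioi K := by
    ext k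
    simp only [Set.mem_setOf_eq, Set.mem_union, Set.mem_Iio, Set.mem_Ioi, lt_abs, lt_neg]
    tauto
  have hS_meas : MeasurableSet {k : ℝ | K < |k|} := by
    rw [hSeq]; exact measurableSet_Iio.union measurableSet_Ioi
  have hdisj : Disjoint (Set.Iio (-K)) (Set.Ioi K) :=
    (Set.Iic_disjoint_Ioi (by linarith)).mono_left Set.Iio_subset_Iic_self
  set h : ℝ → ℝ := fun x => M * |x| ^ (-(2 : ℝ)) with hh_def
  have hh_Ioi : IntegrableOn h (Set.Ioi K) := by
    have base : IntegrableOn (fun x : ℝ => M * x ^ (-(2 : ℝ))) (Set.Ioi K) :=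
      (integrableOn_Ioi_rpow_of_lt (show (-2 : ℝ) < -1 by norm_num) hK0).const_mul M
    refine base.congr_fun (fun x hx => ?_) measurableSet_Ioi
    have : (0 : ℝ) < x := lt_trans hK0 hx
    simp [hh_def, abs_of_pos this]
  have hh_neg : ∀ x : ℝ, h (-x) = h x := fun x => by simp [hh_def]
  have hh_Iio : IntegrableOn h (Set.Iio (-K)) := by
    have m : MeasurableEmbedding fun x : ℝ => -x := (Homeomorph.neg ℝ).measurableEmbedding
    rw [← Measure.map_neg_eq_self (volume : Measure ℝ), m.integrableOn_map_iff]
    have hpre : ((fun x : ℝ => -x) ⁻¹' Set.Iio (-K)) = Set.Ioi K := by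
      ext x; simp [Set.mem_Iio, Set.mem_Ioi]
    rw [hpre]
    exact hh_Ioi.congr_fun (fun x _ => (hh_neg x).symm) measurableSet_Ioi
  have hhS : IntegrableOn h {k : ℝ | K < |k|} := by
    rw [hSeq]; exact hh_Iio.union hh_Ioi
  -- measurability of g
  have hgcont : Continuous fun k : ℝ => ‖g k‖ := by
    rw [hgdef]
    have h1 : Continuous fun k : ℝ => (1 + Complex.I * (k : ℂ)) ^ (β : ℂ) := by
      apply Continuous.cpow
        (continuous_const.add (continuous_const.mul Complex.continuous_ofReal)) continuous_const
      intro k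
      rw [Complex.mem_slitPlane_iff]; left; simp
    have h2 : Continuous fun k : ℝ =>
        (C : ℂ) * (1 - Complex.I * k) * Complex.exp ((1 + Complex.I * k) ^ (β : ℂ)) :=
      (continuous_const.mul
        (continuous_const.sub (continuous_const.mul Complex.continuous_ofReal))).mul
        (Complex.continuous_exp.comp h1)
    apply Continuous.norm
    apply continuous_const.div h2
    intro k
    refine mul_ne_zero (mul_ne_zero ?_ ?_) (Complex.exp_ne_zero _)
    · simpa using hC.ne'
    · intro hzero
      have : (1 - Complex.I * (k : ℂ)).re = 1 := by simp
      rw [hzero] at this; simp at this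
  have hgint : IntegrableOn (fun k => ‖g k‖) {k : ℝ | K < |k|} := by
    apply Integrable.mono' hhS (hgcont.aestronglyMeasurable.restrict)
    filter_upwards [ae_restrict_mem hS_meas] with k hk
    rw [Real.norm_eq_abs, _root_.abs_of_nonneg (norm_nonneg _)]
    exact hpt k hk
  -- compute the integral of h
  have hIoi : (∫ x in Set.Ioi K, h x) = M * K⁻¹ := by
    rw [setIntegral_congr_fun measurableSet_Ioi
      (fun x (hx : x ∈ Set.Ioi K) => by
        have : (0 : ℝ) < x := lt_trans hK0 hx
        simp [hh_def, abs_of_pos this] : Set.EqOn h (fun x => M * x ^ (-(2 : ℝ))) _),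
      integral_const_mul, integral_Ioi_rpow_of_lt (show (-2 : ℝ) < -1 by norm_num) hK0]
    norm_num [Real.rpow_neg_one]
  have hIio : (∫ x in Set.Iio (-K), h x) = M * K⁻¹ := by
    rw [← integral_Iic_eq_integral_Iio, ← integral_comp_neg_Ioi]
    rw [show (fun x : ℝ => h (-x)) = h from funext hh_neg]
    exact hIoi
  have hRHS : (2 ^ (B + 1) * (Nat.factorial B : ℝ)) / (C * c ^ B) * (1 / K) * E
      = M * K⁻¹ + M * K⁻¹ := by
    rw [hM_def, pow_succ]
    field_simp
    ring
  calc (∫ k in {k : ℝ | K < |k|}, ‖g k‖) ≤ ∫ k in {k : ℝ | K < |k|}, h k :=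
        setIntegral_mono_on hgint hhS hS_meas hpt
    _ = (∫ k in Set.Iio (-K), h k) + ∫ k in Set.Ioi K, h k := by
        rw [hSeq, setIntegral_union hdisj measurableSet_Ioi hh_Iio hh_Ioi]
    _ = M * K⁻¹ + M * K⁻¹ := by rw [hIio, hIoi]
    _ = (2 ^ (B + 1) * (Nat.factorial B : ℝ)) / (C * c ^ B) * (1 / K) * E := hRHS.symm
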